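/- For P ∈ 𝓘ⁿ_S(g), the expansion P(F+ψ+φ) = Σ_{k+ℓ=2n} Q^{k,ℓ} into bihomogeneous components Q^{k,ℓ} ∈ ℬ^{k,ℓ} satisfies the descent equations δQ^{k,ℓ} + dQ^{k-1,ℓ+1} = 0 for all k, ℓ with k+ℓ = 2n (with Q^{-1,2n+1} := 0); in particular each Q^{k,ℓ} is a δ-cocycle modulo d. -/

import Mathlib

open scoped TensorProduct

noncomputable section

/-- The graded bracket on `g ⊗ Ω` induced by `[X⊗P, Y⊗Q] = ⁅X,Y⁆ ⊗ (P*Q)`. -/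
def gaBracket (g : Type) [LieRing g] [LieAlgebra ℂ g] (Ω : Type) [Ring Ω] [Algebra ℂ Ω] :
    (g ⊗[ℂ] Ω) →ₗ[ℂ] (g ⊗[ℂ] Ω) →ₗ[ℂ] (g ⊗[ℂ] Ω) :=
  TensorProduct.map₂
    (LinearMap.mk₂ ℂ (fun X Y => ⁅X, Y⁆)
      (by intros; simp [add_lie]) (by intros; simp [smul_lie])
      (by intros; simp [lie_add]) (by intros; simp [lie_smul]))
    (LinearMap.mul ℂ Ω)

/-- The submodule of `g ⊗ Ω` of `g`-valued elements with components in a submodule `S` of `Ω`. -/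
def gvSub (g : Type) [LieRing g] [LieAlgebra ℂ g] {Ω : Type} [AddCommGroup Ω] [Module ℂ Ω]
    (S : Submodule ℂ Ω) : Submodule ℂ (g ⊗[ℂ] Ω) :=
  LinearMap.range (LinearMap.lTensor g S.subtype)

/-- A bigraded-commutative algebra structure on `Ω` given by bidegree pieces `gr k l`. -/
def IsBigradedCommAlg (Ω : Type) [Ring Ω] [Algebra ℂ Ω] (gr : ℕ → ℕ → Submodule ℂ Ω) : Prop :=
  (1 : Ω) ∈ gr 0 0 ∧
  (∀ k l m n, ∀ a ∈ gr k l, ∀ b ∈ gr m n, a * b ∈ gr (k + m) (l + n)) ∧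
  (∀ k l m n, ∀ a ∈ gr k l, ∀ b ∈ gr m n,
      a * b = ((-1 : ℂ)) ^ ((k + l) * (m + n)) • (b * a)) ∧
  DirectSum.IsInternal (fun p : ℕ × ℕ => gr p.1 p.2)

/-- An antiderivation with respect to the total degree of a bigrading. -/
def IsAntideriv {Ω : Type} [Ring Ω] [Algebra ℂ Ω] (gr : ℕ → ℕ → Submodule ℂ Ω)
    (R : Ω →ₗ[ℂ] Ω) : Prop :=
  ∀ k l, ∀ a ∈ gr k l, ∀ b, R (a * b) = R a * b + ((-1 : ℂ)) ^ (k + l) • (a * R b)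

/-- The bigraded Weil algebra data: a bigraded-commutative differential algebra with
differentials `d`, `δ` of bidegrees `(1,0)`, `(0,1)` and `g`-valued generators
`A, α, F, φ, ψ, ξ, B, β` satisfying the structure equations of Lemma 1.1. -/
structure BigradedWeil (g : Type) [LieRing g] [LieAlgebra ℂ g]
    (𝔄 : Type) [Ring 𝔄] [Algebra ℂ 𝔄] where
  gr : ℕ → ℕ → Submodule ℂ 𝔄
  graded : IsBigradedCommAlg 𝔄 gr
  d : 𝔄 →ₗ[ℂ] 𝔄
  δ : 𝔄 →ₗ[ℂ] 𝔄
  d_antideriv : IsAntideriv gr d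
  δ_antideriv : IsAntideriv gr δ
  d_gr : ∀ k l, ∀ x ∈ gr k l, d x ∈ gr (k + 1) l
  δ_gr : ∀ k l, ∀ x ∈ gr k l, δ x ∈ gr k (l + 1)
  d_sq : ∀ x, d (d x) = 0
  δ_sq : ∀ x, δ (δ x) = 0
  d_δ : ∀ x, d (δ x) + δ (d x) = 0
  A : g ⊗[ℂ] 𝔄
  α : g ⊗[ℂ] 𝔄
  F : g ⊗[ℂ] 𝔄
  φ : g ⊗[ℂ] 𝔄
  ψ : g ⊗[ℂ] 𝔄
  ξ : g ⊗[ℂ] 𝔄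
  B : g ⊗[ℂ] 𝔄
  β : g ⊗[ℂ] 𝔄
  A_mem : A ∈ gvSub g (gr 1 0)
  α_mem : α ∈ gvSub g (gr 0 1)
  F_mem : F ∈ gvSub g (gr 2 0)
  φ_mem : φ ∈ gvSub g (gr 0 2)
  ψ_mem : ψ ∈ gvSub g (gr 1 1)
  ξ_mem : ξ ∈ gvSub g (gr 1 1)
  B_mem : B ∈ gvSub g (gr 2 1)
  β_mem : β ∈ gvSub g (gr 1 2)
  eqF : F = LinearMap.lTensor g d A + (2⁻¹ : ℂ) • gaBracket g 𝔄 A A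
  eqφ : φ = LinearMap.lTensor g δ α + (2⁻¹ : ℂ) • gaBracket g 𝔄 α α
  eqψ : ψ = LinearMap.lTensor g δ A + LinearMap.lTensor g d α + gaBracket g 𝔄 A α
  eqξ : ξ = LinearMap.lTensor g δ A
  eqB : B = LinearMap.lTensor g δ F + gaBracket g 𝔄 α F
  eqβ : β = LinearMap.lTensor g d φ + gaBracket g 𝔄 A φ

/-- The universal property expressing that the bigraded-commutative algebra `𝔄` is free on
the given list of `g`-valued generators with the given bidegrees. -/
def FreeOn (g : Type) [LieRing g] [LieAlgebra ℂ g] {𝔄 : Type} [Ring 𝔄] [Algebra ℂ 𝔄]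
    (gr : ℕ → ℕ → Submodule ℂ 𝔄) {m : ℕ} (gens : Fin m → (ℕ × ℕ) × (g ⊗[ℂ] 𝔄)) : Prop :=
  ∀ (Ω : Type) [Ring Ω] [Algebra ℂ Ω] (grΩ : ℕ → ℕ → Submodule ℂ Ω),
    IsBigradedCommAlg Ω grΩ →
    ∀ v : Fin m → g ⊗[ℂ] Ω,
      (∀ j, v j ∈ gvSub g (grΩ (gens j).1.1 (gens j).1.2)) →
      ∃! h : 𝔄 →ₐ[ℂ] Ω,
        (∀ k l, ∀ x ∈ gr k l, h x ∈ grΩ k l) ∧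
        ∀ j, LinearMap.lTensor g h.toLinearMap (gens j).2 = v j

/-- The list of generators of the bigraded Weil algebra with their bidegrees. -/
def BigradedWeil.gens {g : Type} [LieRing g] [LieAlgebra ℂ g] {𝔄 : Type} [Ring 𝔄]
    [Algebra ℂ 𝔄] (W : BigradedWeil g 𝔄) : Fin 8 → (ℕ × ℕ) × (g ⊗[ℂ] 𝔄) :=
  ![((1, 0), W.A), ((0, 1), W.α), ((2, 0), W.F), ((0, 2), W.φ),
    ((1, 1), W.ψ), ((1, 1), W.ξ), ((2, 1), W.B), ((1, 2), W.β)]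

/-- The `i`-th component in `𝔄` of a `g`-valued element of `g ⊗ 𝔄`, w.r.t. a basis of `g`. -/
def coordEv {g : Type} [LieRing g] [LieAlgebra ℂ g] {ι : Type} (b : Module.Basis ι ℂ g)
    {𝔄 : Type} [Ring 𝔄] [Algebra ℂ 𝔄] (i : ι) : g ⊗[ℂ] 𝔄 →ₗ[ℂ] 𝔄 :=
  (TensorProduct.lid ℂ 𝔄).toLinearMap ∘ₗ LinearMap.rTensor 𝔄 (b.coord i)

/-- Evaluation of a multilinear form `I` on `g` on `g`-valued elements `Z j ∈ g ⊗ 𝔄`,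
multiplying the `𝔄`-components in order. -/
def multiEval {g : Type} [LieRing g] [LieAlgebra ℂ g] {ι : Type} [Fintype ι]
    (b : Module.Basis ι ℂ g) {𝔄 : Type} [Ring 𝔄] [Algebra ℂ 𝔄] {n : ℕ}
    (I : MultilinearMap ℂ (fun _ : Fin n => g) ℂ) (Z : Fin n → g ⊗[ℂ] 𝔄) : 𝔄 :=
  ∑ iv : Fin n → ι, I (fun j => b (iv j)) • (List.ofFn fun j => coordEv b (iv j) (Z j)).prod

/-- `ad`-invariance of a multilinear form on `g`. -/
def IsInvForm {g : Type} [LieRing g] [LieAlgebra ℂ g] {n : ℕ}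
    (I : MultilinearMap ℂ (fun _ : Fin n => g) ℂ) : Prop :=
  ∀ (X : g) (v : Fin n → g), ∑ j, I (Function.update v j ⁅v j, X⁆) = 0

/-- Symmetry of a multilinear form on `g`. -/
def IsSymForm {g : Type} [LieRing g] [LieAlgebra ℂ g] {n : ℕ}
    (I : MultilinearMap ℂ (fun _ : Fin n => g) ℂ) : Prop :=
  ∀ (σ : Equiv.Perm (Fin n)) (v : Fin n → g), I (fun j => v (σ j)) = I v

/-- The five `g`-valued elements `F, ψ, φ, B, β` of the bigraded Weil algebra. -/
def BigradedWeil.genOf {g : Type} [LieRing g] [LieAlgebra ℂ g] {𝔄 : Type} [Ring 𝔄]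
    [Algebra ℂ 𝔄] (W : BigradedWeil g 𝔄) : Fin 5 → g ⊗[ℂ] 𝔄 :=
  ![W.F, W.ψ, W.φ, W.B, W.β]

/-- The base `ℬ(g) ⊆ 𝔄(g)`: the span of the invariant "polynomials" `𝓘(F,ψ,φ,B,β)`. -/
def baseB {g : Type} [LieRing g] [LieAlgebra ℂ g] {ι : Type} [Fintype ι] (b : Module.Basis ι ℂ g)
    {𝔄 : Type} [Ring 𝔄] [Algebra ℂ 𝔄] (W : BigradedWeil g 𝔄) : Submodule ℂ 𝔄 :=
  Submodule.span ℂ { x | ∃ (n : ℕ) (I : MultilinearMap ℂ (fun _ : Fin n => g) ℂ)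
      (c : Fin n → Fin 5), IsInvForm I ∧ x = multiEval b I (fun j => W.genOf (c j)) }

end

noncomputable section DescentAux
open Finset

variable {g : Type} [LieRing g] [LieAlgebra ℂ g] {ι : Type} [Fintype ι] (b : Module.Basis ι ℂ g)
variable {𝔄 : Type} [Ring 𝔄] [Algebra ℂ 𝔄]

@[simp] lemma coordEv_tmul (i : ι) (X : g) (a : 𝔄) :
    coordEv b i (X ⊗ₜ[ℂ] a) = b.coord i X • a := by
  simp [coordEv]

lemma coordEv_lTensor (i : ι) (L : 𝔄 →ₗ[ℂ] 𝔄) (Z : g ⊗[ℂ] 𝔄) :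
    coordEv b i (LinearMap.lTensor g L Z) = L (coordEv b i Z) := by
  induction Z using TensorProduct.induction_on with
  | zero => simp
  | tmul X a => simp
  | add x y hx hy => simp [hx, hy]

lemma coordEv_mem {S : Submodule ℂ 𝔄} (i : ι) {Z : g ⊗[ℂ] 𝔄} (hZ : Z ∈ gvSub g S) :
    coordEv b i Z ∈ S := by
  obtain ⟨w, rfl⟩ := hZ
  induction w using TensorProduct.induction_on with
  | zero => simpa using S.zero_mem
  | tmul X s => simpa using S.smul_mem _ s.2
  | add x y hx hy => rw [map_add, map_add]; exact S.add_mem hx hy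

@[simp] lemma gaBracket_tmul (X Y : g) (a c : 𝔄) :
    gaBracket g 𝔄 (X ⊗ₜ[ℂ] a) (Y ⊗ₜ[ℂ] c) = ⁅X, Y⁆ ⊗ₜ[ℂ] (a * c) := by
  simp [gaBracket]

def lieBil : g →ₗ[ℂ] g →ₗ[ℂ] g :=
  LinearMap.mk₂ ℂ (fun X Y => ⁅X, Y⁆)
    (by intros; simp [add_lie]) (by intros; simp [smul_lie])
    (by intros; simp [lie_add]) (by intros; simp [lie_smul])

@[simp] lemma lieBil_apply (X Y : g) : lieBil X Y = ⁅X, Y⁆ := rfl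

lemma coord_lie_expand (i : ι) (X Y : g) :
    b.coord i ⁅X, Y⁆ = ∑ p, ∑ q, b.repr X p * b.repr Y q * b.coord i ⁅b p, b q⁆ := by
  have : ⁅X, Y⁆ = lieBil X Y := rfl
  rw [this]
  conv_lhs => rw [← b.sum_repr X, ← b.sum_repr Y]
  simp only [map_sum, map_smul, LinearMap.sum_apply, LinearMap.smul_apply, lieBil_apply,
    smul_eq_mul, Finset.mul_sum]
  rw [Finset.sum_comm]
  refine Finset.sum_congr rfl fun p _ => Finset.sum_congr rfl fun q _ => by ring

lemma coordEv_gaBracket (i : ι) (Z W : g ⊗[ℂ] 𝔄) :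
    coordEv b i (gaBracket g 𝔄 Z W)
      = ∑ p, ∑ q, b.coord i ⁅b p, b q⁆ • (coordEv b p Z * coordEv b q W) := by
  induction Z using TensorProduct.induction_on with
  | zero => simp
  | add x y hx hy => simp only [map_add, LinearMap.add_apply, hx, hy, add_mul, smul_add,
      Finset.sum_add_distrib]
  | tmul X a =>
    induction W using TensorProduct.induction_on with
    | zero => simp
    | add x y hx hy => simp only [map_add, hx, hy, mul_add, smul_add, Finset.sum_add_distrib]
    | tmul Y c =>
      rw [gaBracket_tmul, coordEv_tmul, coord_lie_expand b i X Y, Finset.sum_smul]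
      refine Finset.sum_congr rfl fun p _ => ?_
      rw [Finset.sum_smul]
      refine Finset.sum_congr rfl fun q _ => ?_
      simp only [coordEv_tmul, smul_mul_assoc, mul_smul_comm, smul_smul, Module.Basis.coord_apply]
      ring_nf

end DescentAux

noncomputable section DescentAux2
open Finset

variable {g : Type} [LieRing g] [LieAlgebra ℂ g] {ι : Type} [Fintype ι] (b : Module.Basis ι ℂ g)
variable {𝔄 : Type} [Ring 𝔄] [Algebra ℂ 𝔄] (W : BigradedWeil g 𝔄)

/-- The total differential `d + δ`. -/
def Dtot : 𝔄 →ₗ[ℂ] 𝔄 := W.d + W.δ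

/-- Odd part: total degree 1. -/
def oddP : Submodule ℂ 𝔄 := W.gr 1 0 ⊔ W.gr 0 1

/-- Even part: total degree 2. -/
def evenP : Submodule ℂ 𝔄 := W.gr 2 0 ⊔ W.gr 1 1 ⊔ W.gr 0 2

lemma Dtot_sq (x : 𝔄) : Dtot W (Dtot W x) = 0 := by
  have h := W.d_δ x
  simp only [Dtot, LinearMap.add_apply, map_add, W.d_sq, W.δ_sq]
  rw [zero_add, add_zero, add_comm]
  exact h

lemma Dtot_mul_homog {k l t : ℕ} (h : k + l = t) {x : 𝔄} (hx : x ∈ W.gr k l) (y : 𝔄) :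
    Dtot W (x * y) = Dtot W x * y + ((-1 : ℂ)) ^ t • (x * Dtot W y) := by
  subst h
  simp only [Dtot, LinearMap.add_apply, W.d_antideriv k l x hx y, W.δ_antideriv k l x hx y,
    mul_add, smul_add, add_mul]
  abel

lemma Dtot_one : Dtot W 1 = 0 := by
  have h := Dtot_mul_homog W (by norm_num : 0 + 0 = 0) W.graded.1 (1 : 𝔄)
  simp only [mul_one, one_mul, pow_zero, one_smul] at h
  exact (left_eq_add.mp h)

lemma homog_comm {k l m n' : ℕ} {x y : 𝔄} (hx : x ∈ W.gr k l) (hy : y ∈ W.gr m n') :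
    x * y = ((-1 : ℂ)) ^ ((k + l) * (m + n')) • (y * x) :=
  W.graded.2.2.1 k l m n' x hx y hy

lemma mem_oddP_iff {x : 𝔄} :
    x ∈ oddP W ↔ ∃ u v, u ∈ W.gr 1 0 ∧ v ∈ W.gr 0 1 ∧ x = u + v := by
  rw [oddP, Submodule.mem_sup]
  constructor
  · rintro ⟨u, hu, v, hv, rfl⟩; exact ⟨u, v, hu, hv, rfl⟩
  · rintro ⟨u, v, hu, hv, rfl⟩; exact ⟨u, hu, v, hv, rfl⟩

lemma mem_evenP_iff {x : 𝔄} :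
    x ∈ evenP W ↔ ∃ u v w, u ∈ W.gr 2 0 ∧ v ∈ W.gr 1 1 ∧ w ∈ W.gr 0 2 ∧ x = u + v + w := by
  rw [evenP, Submodule.mem_sup]
  constructor
  · rintro ⟨uv, huv, w, hw, rfl⟩
    obtain ⟨u, hu, v, hv, rfl⟩ := Submodule.mem_sup.mp huv
    exact ⟨u, v, w, hu, hv, hw, rfl⟩
  · rintro ⟨u, v, w, hu, hv, hw, rfl⟩
    exact ⟨u + v, Submodule.mem_sup.mpr ⟨u, hu, v, hv, rfl⟩, w, hw, rfl⟩

lemma Dtot_mul_odd {x : 𝔄} (hx : x ∈ oddP W) (y : 𝔄) :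
    Dtot W (x * y) = Dtot W x * y - x * Dtot W y := by
  obtain ⟨u, v, hu, hv, rfl⟩ := (mem_oddP_iff W).mp hx
  rw [add_mul, map_add, Dtot_mul_homog W (by norm_num : 1 + 0 = 1) hu y,
    Dtot_mul_homog W (by norm_num : 0 + 1 = 1) hv y]
  simp only [pow_one, neg_smul, one_smul, map_add, add_mul]
  abel

lemma Dtot_mul_even {x : 𝔄} (hx : x ∈ evenP W) (y : 𝔄) :
    Dtot W (x * y) = Dtot W x * y + x * Dtot W y := by
  obtain ⟨u, v, w, hu, hv, hw, rfl⟩ := (mem_evenP_iff W).mp hx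
  rw [add_mul, add_mul, map_add, map_add, Dtot_mul_homog W (by norm_num : 2 + 0 = 2) hu y,
    Dtot_mul_homog W (by norm_num : 1 + 1 = 2) hv y,
    Dtot_mul_homog W (by norm_num : 0 + 2 = 2) hw y]
  simp only [neg_one_sq, one_smul, map_add, add_mul]
  abel

lemma odd_anticomm {x y : 𝔄} (hx : x ∈ oddP W) (hy : y ∈ oddP W) : x * y = -(y * x) := by
  obtain ⟨u, v, hu, hv, rfl⟩ := (mem_oddP_iff W).mp hx
  obtain ⟨u', v', hu', hv', rfl⟩ := (mem_oddP_iff W).mp hy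
  have h1 := homog_comm W hu hu'
  have h2 := homog_comm W hu hv'
  have h3 := homog_comm W hv hu'
  have h4 := homog_comm W hv hv'
  simp only [pow_one, neg_smul, one_smul, Nat.mul_one, Nat.add_zero, Nat.zero_add,
    Nat.one_mul] at h1 h2 h3 h4
  simp only [mul_add, add_mul, h1, h2, h3, h4]
  abel

lemma even_odd_comm {x y : 𝔄} (hx : x ∈ evenP W) (hy : y ∈ oddP W) : x * y = y * x := by
  obtain ⟨u, v, w, hu, hv, hw, rfl⟩ := (mem_evenP_iff W).mp hx
  obtain ⟨u', v', hu', hv', rfl⟩ := (mem_oddP_iff W).mp hy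
  have h1 := homog_comm W hu hu'
  have h2 := homog_comm W hu hv'
  have h3 := homog_comm W hv hu'
  have h4 := homog_comm W hv hv'
  have h5 := homog_comm W hw hu'
  have h6 := homog_comm W hw hv'
  simp only [neg_one_sq, one_smul, Nat.add_zero, Nat.zero_add, Nat.mul_one,
    show (2+0)*(1+0) = 2 by norm_num, show (2+0)*(0+1) = 2 by norm_num,
    show (1+1)*(1+0) = 2 by norm_num, show (1+1)*(0+1) = 2 by norm_num,
    show (0+2)*(1+0) = 2 by norm_num, show (0+2)*(0+1) = 2 by norm_num] at h1 h2 h3 h4 h5 h6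
  simp only [mul_add, add_mul, h1, h2, h3, h4, h5, h6]
  abel

lemma odd_cyc {x y z : 𝔄} (hx : x ∈ oddP W) (hy : y ∈ oddP W) (hz : z ∈ oddP W) :
    x * y * z = y * z * x := by
  rw [odd_anticomm W hx hy, neg_mul, mul_assoc, odd_anticomm W hx hz, mul_neg, mul_assoc]
  abel

lemma Dtot_odd_mem {x : 𝔄} (hx : x ∈ oddP W) : Dtot W x ∈ evenP W := by
  obtain ⟨u, v, hu, hv, rfl⟩ := (mem_oddP_iff W).mp hx
  rw [mem_evenP_iff]
  refine ⟨W.d u, W.δ u + W.d v, W.δ v, W.d_gr 1 0 u hu, ?_, ?_, ?_⟩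
  · exact Submodule.add_mem _ (W.δ_gr 1 0 u hu) (W.d_gr 0 1 v hv)
  · exact W.δ_gr 0 1 v hv
  · simp only [Dtot, LinearMap.add_apply, map_add]; abel

end DescentAux2

noncomputable section DescentAux3
open Finset

variable {g : Type} [LieRing g] [LieAlgebra ℂ g] {ι : Type} [Fintype ι] (b : Module.Basis ι ℂ g)
variable {𝔄 : Type} [Ring 𝔄] [Algebra ℂ 𝔄] (W : BigradedWeil g 𝔄)

/-- Components of the total connection. -/
def aC (i : ι) : 𝔄 := coordEv b i (W.A + W.α)

/-- Components of the total curvature. -/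
def fC (i : ι) : 𝔄 := coordEv b i (W.F + W.ψ + W.φ)

/-- Structure constants. -/
def cS (i p q : ι) : ℂ := b.coord i ⁅b p, b q⁆

lemma cS_antisymm (i p q : ι) : cS b i q p = -cS b i p q := by
  rw [cS, cS, ← lie_skew, map_neg]

lemma aC_mem (i : ι) : aC b W i ∈ oddP W := by
  rw [aC, map_add]
  exact Submodule.add_mem _ (Submodule.mem_sup_left (coordEv_mem b i W.A_mem))
    (Submodule.mem_sup_right (coordEv_mem b i W.α_mem))

lemma fC_mem (i : ι) : fC b W i ∈ evenP W := by
  rw [fC, map_add, map_add]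
  refine Submodule.add_mem _ (Submodule.add_mem _ ?_ ?_) ?_
  · exact Submodule.mem_sup_left (Submodule.mem_sup_left (coordEv_mem b i W.F_mem))
  · exact Submodule.mem_sup_left (Submodule.mem_sup_right (coordEv_mem b i W.ψ_mem))
  · exact Submodule.mem_sup_right (coordEv_mem b i W.φ_mem)

lemma fC_eq (i : ι) :
    fC b W i = Dtot W (aC b W i)
      + (2⁻¹ : ℂ) • ∑ p, ∑ q, cS b i p q • (aC b W p * aC b W q) := by
  set A_ : ι → 𝔄 := fun p => coordEv b p W.A with hA_
  set al : ι → 𝔄 := fun p => coordEv b p W.α with hal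
  have hAmem : ∀ p, A_ p ∈ W.gr 1 0 := fun p => coordEv_mem b p W.A_mem
  have halmem : ∀ p, al p ∈ W.gr 0 1 := fun p => coordEv_mem b p W.α_mem
  have hF : coordEv b i W.F = W.d (A_ i)
      + (2⁻¹ : ℂ) • ∑ p, ∑ q, cS b i p q • (A_ p * A_ q) := by
    conv_lhs => rw [W.eqF]
    rw [map_add, map_smul, coordEv_lTensor, coordEv_gaBracket]; rfl
  have hφ : coordEv b i W.φ = W.δ (al i)
      + (2⁻¹ : ℂ) • ∑ p, ∑ q, cS b i p q • (al p * al q) := by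
    conv_lhs => rw [W.eqφ]
    rw [map_add, map_smul, coordEv_lTensor, coordEv_gaBracket]; rfl
  have hψ : coordEv b i W.ψ = W.δ (A_ i) + W.d (al i)
      + ∑ p, ∑ q, cS b i p q • (A_ p * al q) := by
    conv_lhs => rw [W.eqψ]
    rw [map_add, map_add, coordEv_lTensor, coordEv_lTensor, coordEv_gaBracket]
    rfl
  have hcross : ∑ p, ∑ q, cS b i p q • (al p * A_ q)
      = ∑ p, ∑ q, cS b i p q • (A_ p * al q) := by
    rw [Finset.sum_comm]
    refine Finset.sum_congr rfl fun p _ => Finset.sum_congr rfl fun q _ => ?_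
    have h1 : al q * A_ p = -(A_ p * al q) := by
      have h := homog_comm W (halmem q) (hAmem p)
      norm_num at h
      exact h
    rw [cS_antisymm, h1, neg_smul, smul_neg, neg_neg]
  have hquad : ∀ p q : ι, aC b W p * aC b W q
      = A_ p * A_ q + A_ p * al q + al p * A_ q + al p * al q := by
    intro p q
    show coordEv b p (W.A + W.α) * coordEv b q (W.A + W.α) = _
    rw [map_add, map_add, add_mul, mul_add, mul_add]
    abel
  have haCi : aC b W i = A_ i + al i := by rw [aC, map_add]
  have hDa : Dtot W (aC b W i) = W.d (A_ i) + W.δ (A_ i) + W.d (al i) + W.δ (al i) := by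
    rw [haCi]
    simp only [Dtot, LinearMap.add_apply, map_add]
    abel
  have hsplit : ∑ p, ∑ q, cS b i p q • (aC b W p * aC b W q)
      = (∑ p, ∑ q, cS b i p q • (A_ p * A_ q))
        + (∑ p, ∑ q, cS b i p q • (A_ p * al q))
        + (∑ p, ∑ q, cS b i p q • (al p * A_ q))
        + (∑ p, ∑ q, cS b i p q • (al p * al q)) := by
    simp only [hquad, smul_add, Finset.sum_add_distrib]
  rw [fC, map_add, map_add, hF, hφ, hψ, hDa, hsplit, hcross]
  module


end DescentAux3

noncomputable section DescentAux4
open Finset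

variable {g : Type} [LieRing g] [LieAlgebra ℂ g] {ι : Type} [Fintype ι] (b : Module.Basis ι ℂ g)
variable {𝔄 : Type} [Ring 𝔄] [Algebra ℂ 𝔄] (W : BigradedWeil g 𝔄)

lemma jac_coeff (i q r s : ι) :
    ∑ p, cS b i p q * cS b p r s = b.coord i ⁅⁅b r, b s⁆, b q⁆ := by
  have h : ⁅⁅b r, b s⁆, b q⁆ = lieBil ⁅b r, b s⁆ (b q) := rfl
  rw [h]
  conv_rhs => rw [← b.sum_repr ⁅b r, b s⁆]
  simp only [map_sum, map_smul, LinearMap.sum_apply, LinearMap.smul_apply, lieBil_apply,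
    smul_eq_mul]
  refine Finset.sum_congr rfl fun p _ => ?_
  rw [cS, cS]
  simp only [Module.Basis.coord_apply]
  ring

/-- Cyclic rotation on triples. -/
def cyc3 (ι : Type) : (ι × ι × ι) ≃ (ι × ι × ι) where
  toFun x := (x.2.1, x.2.2, x.1)
  invFun x := (x.2.2, x.1, x.2.1)
  left_inv x := rfl
  right_inv x := rfl

lemma cubic_zero (i : ι) :
    ∑ x : ι × ι × ι, (b.coord i ⁅⁅b x.1, b x.2.1⁆, b x.2.2⁆)
      • (aC b W x.1 * aC b W x.2.1 * aC b W x.2.2) = 0 := by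
  set t : ι × ι × ι → ℂ := fun x => b.coord i ⁅⁅b x.1, b x.2.1⁆, b x.2.2⁆ with ht
  set m : ι × ι × ι → 𝔄 := fun x => aC b W x.1 * aC b W x.2.1 * aC b W x.2.2 with hm
  have hmcyc : ∀ x, m (cyc3 ι x) = m x := by
    rintro ⟨r, s, q⟩
    exact (odd_cyc W (aC_mem b W r) (aC_mem b W s) (aC_mem b W q)).symm
  have htcyc : ∀ x : ι × ι × ι, t x + t (cyc3 ι x) + t (cyc3 ι (cyc3 ι x)) = 0 := by
    rintro ⟨r, s, q⟩
    have h1 : ⁅⁅b r, b s⁆, b q⁆ = -⁅b q, ⁅b r, b s⁆⁆ := (lie_skew _ _).symm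
    have h2 : ⁅⁅b s, b q⁆, b r⁆ = -⁅b r, ⁅b s, b q⁆⁆ := (lie_skew _ _).symm
    have h3 : ⁅⁅b q, b r⁆, b s⁆ = -⁅b s, ⁅b q, b r⁆⁆ := (lie_skew _ _).symm
    have hj : ⁅⁅b r, b s⁆, b q⁆ + ⁅⁅b s, b q⁆, b r⁆ + ⁅⁅b q, b r⁆, b s⁆ = (0 : g) := by
      rw [h1, h2, h3, ← neg_add, ← neg_add, neg_eq_zero]
      exact lie_jacobi (b q) (b r) (b s)
    show t (r, s, q) + t (s, q, r) + t (q, r, s) = 0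
    rw [ht]
    simp only
    rw [← map_add, ← map_add, hj, map_zero]
  set S := ∑ x : ι × ι × ι, t x • m x with hS
  have h1 : S = ∑ x, t (cyc3 ι x) • m x := by
    calc S = ∑ x, t (cyc3 ι x) • m (cyc3 ι x) :=
          (Equiv.sum_comp (cyc3 ι) (fun x => t x • m x)).symm
      _ = ∑ x, t (cyc3 ι x) • m x := by simp only [hmcyc]
  have h2 : S = ∑ x, t (cyc3 ι (cyc3 ι x)) • m x := by
    calc S = ∑ x, t (cyc3 ι x) • m x := h1
      _ = ∑ x, t (cyc3 ι (cyc3 ι x)) • m (cyc3 ι x) :=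
          (Equiv.sum_comp (cyc3 ι) (fun x => t (cyc3 ι x) • m x)).symm
      _ = ∑ x, t (cyc3 ι (cyc3 ι x)) • m x := by simp only [hmcyc]
  have h3 : S + S + S = 0 := by
    nth_rewrite 2 [h1]
    nth_rewrite 2 [h2]
    rw [hS]
    rw [← Finset.sum_add_distrib, ← Finset.sum_add_distrib]
    refine Finset.sum_eq_zero fun x _ => ?_
    rw [← add_smul, ← add_smul, htcyc, zero_smul]
  have h4 : (3 : ℂ) • S = 0 := by
    rw [show (3 : ℂ) = 1 + 1 + 1 by norm_num, add_smul, add_smul, one_smul]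
    exact h3
  rcases smul_eq_zero.mp h4 with h | h
  · exact absurd h (by norm_num)
  · exact h

/-- Bianchi identity in coordinates. -/
lemma Dtot_fC (i : ι) :
    Dtot W (fC b W i) = ∑ p, ∑ q, cS b i p q • (fC b W p * aC b W q) := by
  have key1 : ∑ p, ∑ q, cS b i p q • (aC b W p * Dtot W (aC b W q))
      = -∑ p, ∑ q, cS b i p q • (Dtot W (aC b W p) * aC b W q) := by
    rw [Finset.sum_comm]
    have hpt : ∀ q p : ι, cS b i p q • (aC b W p * Dtot W (aC b W q))
        = -(cS b i q p • (Dtot W (aC b W q) * aC b W p)) := by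
      intro q p
      rw [cS_antisymm b i q p, neg_smul,
        even_odd_comm W (Dtot_odd_mem W (aC_mem b W q)) (aC_mem b W p)]
    calc ∑ q, ∑ p, cS b i p q • (aC b W p * Dtot W (aC b W q))
        = ∑ q, ∑ p, -(cS b i q p • (Dtot W (aC b W q) * aC b W p)) :=
          Finset.sum_congr rfl fun q _ => Finset.sum_congr rfl fun p _ => hpt q p
      _ = -∑ q, ∑ p, cS b i q p • (Dtot W (aC b W q) * aC b W p) := by
          simp only [Finset.sum_neg_distrib]
  -- step 1
  have hDf1 : Dtot W (fC b W i) = ∑ p, ∑ q, cS b i p q • (Dtot W (aC b W p) * aC b W q) := by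
    rw [fC_eq b W i, map_add, Dtot_sq, zero_add, map_smul, map_sum]
    simp only [map_sum, map_smul]
    calc (2⁻¹ : ℂ) • ∑ p, ∑ q, cS b i p q • Dtot W (aC b W p * aC b W q)
        = (2⁻¹ : ℂ) • (∑ p, ∑ q, cS b i p q • (Dtot W (aC b W p) * aC b W q)
            - ∑ p, ∑ q, cS b i p q • (aC b W p * Dtot W (aC b W q))) := by
          rw [← Finset.sum_sub_distrib]
          congr 1
          refine Finset.sum_congr rfl fun p _ => ?_
          rw [← Finset.sum_sub_distrib]
          refine Finset.sum_congr rfl fun q _ => ?_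
          rw [Dtot_mul_odd W (aC_mem b W p), smul_sub]
      _ = (2⁻¹ : ℂ) • ((∑ p, ∑ q, cS b i p q • (Dtot W (aC b W p) * aC b W q))
            + ∑ p, ∑ q, cS b i p q • (Dtot W (aC b W p) * aC b W q)) := by
          rw [key1, sub_neg_eq_add]
      _ = ∑ p, ∑ q, cS b i p q • (Dtot W (aC b W p) * aC b W q) := by
          rw [← two_smul ℂ, smul_smul]
          norm_num
  -- step 2 : substitute D a p
  have hDa_eq : ∀ p, Dtot W (aC b W p)
      = fC b W p - (2⁻¹ : ℂ) • ∑ r, ∑ s, cS b p r s • (aC b W r * aC b W s) := by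
    intro p
    rw [fC_eq b W p]
    abel
  have hsplit : ∀ p q : ι, cS b i p q • (Dtot W (aC b W p) * aC b W q)
      = cS b i p q • (fC b W p * aC b W q)
        - (2⁻¹ : ℂ) • ∑ r, ∑ s, (cS b i p q * cS b p r s)
            • (aC b W r * aC b W s * aC b W q) := by
    intro p q
    rw [hDa_eq p, sub_mul, smul_sub]
    congr 1
    rw [smul_mul_assoc, smul_comm]
    congr 1
    rw [Finset.sum_mul, Finset.smul_sum]
    refine Finset.sum_congr rfl fun r _ => ?_
    rw [Finset.sum_mul, Finset.smul_sum]
    refine Finset.sum_congr rfl fun s _ => ?_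
    rw [smul_mul_assoc, smul_smul]
  -- correction term vanishes
  have hcorr : ∑ p, ∑ q, ∑ r, ∑ s, (cS b i p q * cS b p r s)
      • (aC b W r * aC b W s * aC b W q) = 0 := by
    have hre : ∑ p, ∑ q, ∑ r, ∑ s, (cS b i p q * cS b p r s)
        • (aC b W r * aC b W s * aC b W q)
        = ∑ q, ∑ r, ∑ s, (b.coord i ⁅⁅b r, b s⁆, b q⁆)
            • (aC b W r * aC b W s * aC b W q) := by
      rw [Finset.sum_comm]
      refine Finset.sum_congr rfl fun q _ => ?_
      rw [Finset.sum_comm]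
      refine Finset.sum_congr rfl fun r _ => ?_
      rw [Finset.sum_comm]
      refine Finset.sum_congr rfl fun s _ => ?_
      rw [← Finset.sum_smul, jac_coeff]
    rw [hre]
    have hcz := cubic_zero b W i
    rw [Fintype.sum_prod_type] at hcz
    simp only [Fintype.sum_prod_type] at hcz
    -- hcz : ∑ r, ∑ s, ∑ q, coord i ⁅⁅b r, b s⁆, b q⁆ • (a r * a s * a q) = 0
    calc ∑ q, ∑ r, ∑ s, (b.coord i ⁅⁅b r, b s⁆, b q⁆)
          • (aC b W r * aC b W s * aC b W q)
        = ∑ r, ∑ q, ∑ s, (b.coord i ⁅⁅b r, b s⁆, b q⁆)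
            • (aC b W r * aC b W s * aC b W q) := Finset.sum_comm
      _ = ∑ r, ∑ s, ∑ q, (b.coord i ⁅⁅b r, b s⁆, b q⁆)
            • (aC b W r * aC b W s * aC b W q) :=
          Finset.sum_congr rfl fun r _ => Finset.sum_comm
      _ = 0 := hcz
  rw [hDf1]
  calc ∑ p, ∑ q, cS b i p q • (Dtot W (aC b W p) * aC b W q)
      = ∑ p, ∑ q, (cS b i p q • (fC b W p * aC b W q)
          - (2⁻¹ : ℂ) • ∑ r, ∑ s, (cS b i p q * cS b p r s)
              • (aC b W r * aC b W s * aC b W q)) :=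
        Finset.sum_congr rfl fun p _ => Finset.sum_congr rfl fun q _ => hsplit p q
    _ = (∑ p, ∑ q, cS b i p q • (fC b W p * aC b W q))
        - (2⁻¹ : ℂ) • ∑ p, ∑ q, ∑ r, ∑ s, (cS b i p q * cS b p r s)
            • (aC b W r * aC b W s * aC b W q) := by
        rw [Finset.smul_sum, ← Finset.sum_sub_distrib]
        refine Finset.sum_congr rfl fun p _ => ?_
        rw [Finset.smul_sum, ← Finset.sum_sub_distrib]
    _ = ∑ p, ∑ q, cS b i p q • (fC b W p * aC b W q) := by
        rw [hcorr, smul_zero, sub_zero]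

end DescentAux4

noncomputable section DescentAux5
open Finset

variable {g : Type} [LieRing g] [LieAlgebra ℂ g] {ι : Type} [Fintype ι] (b : Module.Basis ι ℂ g)
variable {𝔄 : Type} [Ring 𝔄] [Algebra ℂ 𝔄] (W : BigradedWeil g 𝔄)

lemma ofFn_update_eq_set {m : ℕ} (x : Fin m → 𝔄) (j : Fin m) (y : 𝔄) :
    List.ofFn (Function.update x j y) = (List.ofFn x).set j y := by
  apply List.ext_getElem
  · simp
  · intro i h1 h2
    simp only [List.getElem_ofFn, List.getElem_set, Function.update_apply]
    have hi : i < m := by simpa using h1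
    by_cases hij : i = (j : ℕ)
    · rw [if_pos (by exact Fin.ext hij), if_pos hij.symm]
    · rw [if_neg (fun hh => hij (by simpa using congrArg Fin.val hh)),
        if_neg (fun hh => hij hh.symm)]

lemma prod_update {m : ℕ} (x : Fin m → 𝔄) (j : Fin m) (y : 𝔄) :
    (List.ofFn (Function.update x j y)).prod
      = ((List.ofFn x).take j).prod * y * ((List.ofFn x).drop ((j : ℕ) + 1)).prod := by
  rw [ofFn_update_eq_set, List.prod_set]
  simp [j.isLt]

lemma prod_update_sum {m : ℕ} (x : Fin m → 𝔄) (j : Fin m) {κ : Type*} (s : Finset κ)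
    (y : κ → 𝔄) :
    (List.ofFn (Function.update x j (∑ k ∈ s, y k))).prod
      = ∑ k ∈ s, (List.ofFn (Function.update x j (y k))).prod := by
  simp only [prod_update, Finset.sum_mul, Finset.mul_sum]

lemma prod_update_smul {m : ℕ} (x : Fin m → 𝔄) (j : Fin m) (r : ℂ) (y : 𝔄) :
    (List.ofFn (Function.update x j (r • y))).prod
      = r • (List.ofFn (Function.update x j y)).prod := by
  simp only [prod_update, smul_mul_assoc, mul_smul_comm]

lemma ofFn_update_zero_succ {m : ℕ} (x : Fin (m + 1) → 𝔄) (y : 𝔄) :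
    List.ofFn (Function.update x 0 y) = y :: List.ofFn (fun i : Fin m => x i.succ) := by
  rw [List.ofFn_succ, Function.update_self,
    show (fun i : Fin m => Function.update x 0 y i.succ) = (fun i : Fin m => x i.succ) from
      funext fun i => Function.update_of_ne (Fin.succ_ne_zero i) y x]

lemma ofFn_update_succ {m : ℕ} (x : Fin (m + 1) → 𝔄) (j : Fin m) (y : 𝔄) :
    List.ofFn (Function.update x j.succ y)
      = x 0 :: List.ofFn (Function.update (fun i : Fin m => x i.succ) j y) := by
  rw [List.ofFn_succ,
    show Function.update x j.succ y 0 = x 0 from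
      Function.update_of_ne (Fin.succ_ne_zero j).symm y x,
    show (fun i : Fin m => Function.update x j.succ y i.succ)
        = Function.update (fun i : Fin m => x i.succ) j y from
      funext fun i => by simp [Function.update_apply, Fin.succ_inj]]

lemma Dtot_ofFn_prod {m : ℕ} (x : Fin m → 𝔄) (hx : ∀ j, x j ∈ evenP W) :
    Dtot W (List.ofFn x).prod
      = ∑ j, (List.ofFn (Function.update x j (Dtot W (x j)))).prod := by
  induction m with
  | zero => simp [Dtot_one W]
  | succ m ih =>
    rw [List.ofFn_succ, List.prod_cons, Dtot_mul_even W (hx 0),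
      ih (fun i => x i.succ) (fun i => hx i.succ), Fin.sum_univ_succ,
      ofFn_update_zero_succ, List.prod_cons, Finset.mul_sum]
    congr 1
    refine Finset.sum_congr rfl fun j _ => ?_
    rw [ofFn_update_succ, List.prod_cons]

lemma mul_comm_prod_odd {y : 𝔄} (hy : y ∈ oddP W) (l : List 𝔄)
    (hl : ∀ z ∈ l, z ∈ evenP W) : y * l.prod = l.prod * y :=
  (Commute.list_prod_right l y (fun z hz => ((even_odd_comm W (hl z hz) hy).symm : _))).eq

lemma prod_update_mul_odd {m : ℕ} (x : Fin m → 𝔄) (hx : ∀ j, x j ∈ evenP W) (j : Fin m)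
    (u y : 𝔄) (hy : y ∈ oddP W) :
    (List.ofFn (Function.update x j (u * y))).prod
      = (List.ofFn (Function.update x j u)).prod * y := by
  rw [prod_update, prod_update]
  have hc : y * ((List.ofFn x).drop ((j : ℕ) + 1)).prod
      = ((List.ofFn x).drop ((j : ℕ) + 1)).prod * y := by
    refine mul_comm_prod_odd W hy _ (fun z hz => ?_)
    obtain ⟨k, hk⟩ := List.mem_ofFn.mp (List.mem_of_mem_drop hz)
    exact hk ▸ hx k
  rw [← mul_assoc _ u y, mul_assoc _ y _, hc, ← mul_assoc]

end DescentAux5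

noncomputable section DescentAux6
open Finset

variable {g : Type} [LieRing g] [LieAlgebra ℂ g] {ι : Type} [Fintype ι] (b : Module.Basis ι ℂ g)
variable {𝔄 : Type} [Ring 𝔄] [Algebra ℂ 𝔄] (W : BigradedWeil g 𝔄)

lemma sum_repr_P {n : ℕ} (P : MultilinearMap ℂ (fun _ : Fin n => g) ℂ)
    (v : Fin n → g) (j : Fin n) (Y : g) :
    ∑ k, P (Function.update v j (b k)) * b.coord k Y = P (Function.update v j Y) := by
  classical
  let L : g →ₗ[ℂ] ℂ :=
    { toFun := fun z => P (Function.update v j z)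
      map_add' := fun z w => by simp
      map_smul' := fun r z => by simp }
  have hL : ∀ z, P (Function.update v j z) = L z := fun z => rfl
  conv_rhs => rw [hL, ← b.sum_repr Y, map_sum]
  refine Finset.sum_congr rfl fun k _ => ?_
  rw [map_smul, ← hL, Module.Basis.coord_apply, smul_eq_mul, mul_comm]

/-- The reindexing involution `(iv, p) ↦ (update iv j p, iv j)`. -/
def updEquiv {n : ℕ} (j : Fin n) : ((Fin n → ι) × ι) ≃ ((Fin n → ι) × ι) where
  toFun x := (Function.update x.1 j x.2, x.1 j)
  invFun x := (Function.update x.1 j x.2, x.1 j)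
  left_inv x := by
    ext k
    · simp only [Function.update_idem]
      by_cases h : k = j
      · subst h; simp
      · simp [Function.update_of_ne h]
    · simp
  right_inv x := by
    ext k
    · simp only [Function.update_idem]
      by_cases h : k = j
      · subst h; simp
      · simp [Function.update_of_ne h]
    · simp

lemma Dtot_multiEval_zero {n : ℕ} (P : MultilinearMap ℂ (fun _ : Fin n => g) ℂ)
    (hinv : IsInvForm P) :
    Dtot W (multiEval b P fun _ => W.F + W.ψ + W.φ) = 0 := by
  classical
  have hME : multiEval b P (fun _ => W.F + W.ψ + W.φ)
      = ∑ iv : Fin n → ι, P (fun j => b (iv j))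
          • (List.ofFn fun j => fC b W (iv j)).prod := rfl
  rw [hME, map_sum]
  have hA : ∀ iv : Fin n → ι,
      Dtot W (P (fun j => b (iv j)) • (List.ofFn fun j => fC b W (iv j)).prod)
        = ∑ j, ∑ p, ∑ q, (P (fun k => b (iv k)) * cS b (iv j) p q)
            • ((List.ofFn fun k => fC b W (Function.update iv j p k)).prod * aC b W q) := by
    intro iv
    rw [map_smul, Dtot_ofFn_prod W _ (fun j => fC_mem b W (iv j)), Finset.smul_sum]
    refine Finset.sum_congr rfl fun j _ => ?_
    rw [Dtot_fC b W (iv j), prod_update_sum, Finset.smul_sum]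
    refine Finset.sum_congr rfl fun p _ => ?_
    rw [prod_update_sum, Finset.smul_sum]
    refine Finset.sum_congr rfl fun q _ => ?_
    rw [prod_update_smul,
      prod_update_mul_odd W _ (fun k => fC_mem b W (iv k)) j _ _ (aC_mem b W q),
      smul_smul]
    rw [show (fun k => fC b W (Function.update iv j p k))
        = Function.update (fun k => fC b W (iv k)) j (fC b W p) from
      funext fun k => by
        by_cases h : k = j
        · subst h; simp
        · simp [Function.update_of_ne h]]
  calc ∑ iv : Fin n → ι,
        Dtot W (P (fun j => b (iv j)) • (List.ofFn fun j => fC b W (iv j)).prod)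
      = ∑ iv : Fin n → ι, ∑ j, ∑ p, ∑ q, (P (fun k => b (iv k)) * cS b (iv j) p q)
          • ((List.ofFn fun k => fC b W (Function.update iv j p k)).prod * aC b W q) :=
        Finset.sum_congr rfl fun iv _ => hA iv
    _ = ∑ j, ∑ iv : Fin n → ι, ∑ p, ∑ q, (P (fun k => b (iv k)) * cS b (iv j) p q)
          • ((List.ofFn fun k => fC b W (Function.update iv j p k)).prod * aC b W q) :=
        Finset.sum_comm
    _ = ∑ j, ∑ q, ∑ iv : Fin n → ι, ∑ p, (P (fun k => b (iv k)) * cS b (iv j) p q)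
          • ((List.ofFn fun k => fC b W (Function.update iv j p k)).prod * aC b W q) := by
        refine Finset.sum_congr rfl fun j _ => ?_
        calc ∑ iv : Fin n → ι, ∑ p, ∑ q, (P (fun k => b (iv k)) * cS b (iv j) p q)
              • ((List.ofFn fun k => fC b W (Function.update iv j p k)).prod * aC b W q)
            = ∑ iv : Fin n → ι, ∑ q, ∑ p, (P (fun k => b (iv k)) * cS b (iv j) p q)
              • ((List.ofFn fun k => fC b W (Function.update iv j p k)).prod * aC b W q) :=
              Finset.sum_congr rfl fun iv _ => Finset.sum_comm
          _ = ∑ q, ∑ iv : Fin n → ι, ∑ p, (P (fun k => b (iv k)) * cS b (iv j) p q)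
              • ((List.ofFn fun k => fC b W (Function.update iv j p k)).prod * aC b W q) :=
              Finset.sum_comm
    _ = ∑ j, ∑ q, ∑ w : Fin n → ι,
          (∑ k, P (fun j' => b (Function.update w j k j')) * cS b k (w j) q)
            • ((List.ofFn fun k => fC b W (w k)).prod * aC b W q) := by
        refine Finset.sum_congr rfl fun j _ => Finset.sum_congr rfl fun q _ => ?_
        calc ∑ iv : Fin n → ι, ∑ p, (P (fun k => b (iv k)) * cS b (iv j) p q)
              • ((List.ofFn fun k => fC b W (Function.update iv j p k)).prod * aC b W q)
            = ∑ x : (Fin n → ι) × ι, (P (fun k => b (x.1 k)) * cS b (x.1 j) x.2 q)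
              • ((List.ofFn fun k => fC b W (Function.update x.1 j x.2 k)).prod * aC b W q) :=
              (Fintype.sum_prod_type (f := fun x : (Fin n → ι) × ι =>
                (P (fun k => b (x.1 k)) * cS b (x.1 j) x.2 q)
                  • ((List.ofFn fun k => fC b W (Function.update x.1 j x.2 k)).prod
                      * aC b W q))).symm
          _ = ∑ x : (Fin n → ι) × ι,
                (P (fun k => b ((updEquiv j x).1 k)) * cS b ((updEquiv j x).1 j) (updEquiv j x).2 q)
                  • ((List.ofFn fun k =>
                      fC b W (Function.update (updEquiv j x).1 j (updEquiv j x).2 k)).prod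
                      * aC b W q) :=
              (Equiv.sum_comp (updEquiv j) (fun x : (Fin n → ι) × ι =>
                (P (fun k => b (x.1 k)) * cS b (x.1 j) x.2 q)
                  • ((List.ofFn fun k => fC b W (Function.update x.1 j x.2 k)).prod
                      * aC b W q))).symm
          _ = ∑ w : Fin n → ι, ∑ k,
                (P (fun k' => b ((updEquiv j (w, k)).1 k'))
                    * cS b ((updEquiv j (w, k)).1 j) (updEquiv j (w, k)).2 q)
                  • ((List.ofFn fun k' =>
                      fC b W (Function.update (updEquiv j (w, k)).1 j (updEquiv j (w, k)).2 k')).prod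
                      * aC b W q) :=
              Fintype.sum_prod_type _
          _ = ∑ w : Fin n → ι,
                (∑ k, P (fun j' => b (Function.update w j k j')) * cS b k (w j) q)
                  • ((List.ofFn fun k => fC b W (w k)).prod * aC b W q) := by
              refine Finset.sum_congr rfl fun w _ => ?_
              rw [Finset.sum_smul]
              refine Finset.sum_congr rfl fun k _ => ?_
              simp only [updEquiv, Equiv.coe_fn_mk, Function.update_self, Function.update_idem,
                Function.update_eq_self]
    _ = ∑ j, ∑ q, ∑ w : Fin n → ι,
          (P (Function.update (fun k => b (w k)) j ⁅b (w j), b q⁆))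
            • ((List.ofFn fun k => fC b W (w k)).prod * aC b W q) := by
        refine Finset.sum_congr rfl fun j _ => Finset.sum_congr rfl fun q _ =>
          Finset.sum_congr rfl fun w _ => ?_
        congr 1
        rw [show (∑ k, P (fun j' => b (Function.update w j k j')) * cS b k (w j) q)
            = ∑ k, P (Function.update (fun k' => b (w k')) j (b k))
                * b.coord k ⁅b (w j), b q⁆ from
          Finset.sum_congr rfl fun k _ => by
            rw [show (fun j' => b (Function.update w j k j'))
                = Function.update (fun k' => b (w k')) j (b k) from
              funext fun j' => by
                by_cases h : j' = j
                · subst h; simp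
                · simp [Function.update_of_ne h]]
            rfl]
        exact sum_repr_P b P _ j _
    _ = ∑ q, ∑ w : Fin n → ι, ∑ j,
          (P (Function.update (fun k => b (w k)) j ⁅b (w j), b q⁆))
            • ((List.ofFn fun k => fC b W (w k)).prod * aC b W q) := by
        rw [Finset.sum_comm]
        exact Finset.sum_congr rfl fun q _ => Finset.sum_comm
    _ = 0 := by
        refine Finset.sum_eq_zero fun q _ => Finset.sum_eq_zero fun w _ => ?_
        rw [← Finset.sum_smul,
          show (∑ j, P (Function.update (fun k => b (w k)) j ⁅b (w j), b q⁆)) = 0 from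
            hinv (b q) (fun k => b (w k)),
          zero_smul]

end DescentAux6

noncomputable section DescentAux7
open Finset
open scoped DirectSum

lemma components_eq_zero {κ M : Type} [DecidableEq κ] [AddCommGroup M] [Module ℂ M]
    {A : κ → Submodule ℂ M} (hI : DirectSum.IsInternal A)
    {s : Finset κ} {x : κ → M} (hx : ∀ p ∈ s, x p ∈ A p)
    (h0 : ∑ p ∈ s, x p = 0) : ∀ p ∈ s, x p = 0 := by
  classical
  set x' : κ → ⨁ p, A p := fun p =>
    if h : p ∈ s then DirectSum.of (fun p => A p) p ⟨x p, hx p h⟩ else 0 with hx'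
  have hv : (DirectSum.coeAddMonoidHom A) (∑ p ∈ s, x' p) = 0 := by
    rw [map_sum, ← h0]
    refine Finset.sum_congr rfl fun p hp => ?_
    rw [hx']
    simp only [dif_pos hp, DirectSum.coeAddMonoidHom_of]
  have hz : ∑ p ∈ s, x' p = 0 := hI.injective (by rw [hv, map_zero])
  intro p hp
  have hcomp : (DFinsupp.evalAddMonoidHom p : (⨁ q, A q) →+ A p) (∑ q ∈ s, x' q) = 0 := by
    rw [hz, map_zero]
  rw [map_sum] at hcomp
  have hsingle : ∑ q ∈ s, (DFinsupp.evalAddMonoidHom p : (⨁ q, A q) →+ A p) (x' q)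
      = (⟨x p, hx p hp⟩ : A p) := by
    rw [Finset.sum_eq_single_of_mem p hp]
    · show (x' p) p = _
      simp only [hx', dif_pos hp]
      exact DirectSum.of_eq_same p _
    · intro q hq hqp
      show (x' q) p = 0
      simp only [hx', dif_pos hq]
      exact DirectSum.of_eq_of_ne q p _ hqp.symm
  rw [hsingle] at hcomp
  exact congrArg Subtype.val hcomp

end DescentAux7

noncomputable section

/-- the bihomogeneous components `Q^{k,ℓ}` of `P(F+ψ+φ)` (with
`k+ℓ = 2n`) satisfy the descent equations `δQ^{k,ℓ} + dQ^{k−1,ℓ+1} = 0`. -/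
theorem stmt_16 (g : Type) [LieRing g] [LieAlgebra ℂ g] [FiniteDimensional ℂ g]
    {ι : Type} [Fintype ι] (b : Module.Basis ι ℂ g)
    (𝔄 : Type) [Ring 𝔄] [Algebra ℂ 𝔄] (W : BigradedWeil g 𝔄)
    (n : ℕ) (P : MultilinearMap ℂ (fun _ : Fin n => g) ℂ)
    (hsym : IsSymForm P) (hinv : IsInvForm P)
    (Q : ℕ → 𝔄)
    (hmem : ∀ j, Q j ∈ baseB b W ∧ Q j ∈ W.gr (2 * n - j) j)
    (hzero : ∀ j, 2 * n < j → Q j = 0)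
    (hsum : ∑ j ∈ Finset.range (2 * n + 1), Q j
        = multiEval b P fun _ => W.F + W.ψ + W.φ) :
    ∀ j ≤ 2 * n, W.δ (Q j) + W.d (Q (j + 1)) = 0 := by
  classical
  intro j hj
  have hD : ∑ m ∈ Finset.range (2 * n + 1), (W.d (Q m) + W.δ (Q m)) = 0 := by
    have h := Dtot_multiEval_zero b W P hinv
    rw [← hsum, map_sum] at h
    rw [← h]
    exact Finset.sum_congr rfl fun m _ => rfl
  set c1 : ℕ → ℕ × ℕ := fun m => (2 * n - m + 1, m) with hc1
  set c2 : ℕ → ℕ × ℕ := fun m => (2 * n - m, m + 1) with hc2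
  set s : Finset (ℕ × ℕ) :=
    (Finset.range (2 * n + 1)).image c1 ∪ (Finset.range (2 * n + 1)).image c2 with hs
  set x : ℕ × ℕ → 𝔄 := fun p => ∑ m ∈ Finset.range (2 * n + 1),
    ((if p = c1 m then W.d (Q m) else 0) + (if p = c2 m then W.δ (Q m) else 0)) with hx
  have hxmem : ∀ p, x p ∈ W.gr p.1 p.2 := by
    intro p
    refine Submodule.sum_mem _ fun m _ => Submodule.add_mem _ ?_ ?_
    · split_ifs with h
      · rw [h]; exact W.d_gr _ _ _ (hmem m).2
      · exact Submodule.zero_mem _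
    · split_ifs with h
      · rw [h]; exact W.δ_gr _ _ _ (hmem m).2
      · exact Submodule.zero_mem _
  have hsum0 : ∑ p ∈ s, x p = 0 := by
    calc ∑ p ∈ s, x p
        = ∑ m ∈ Finset.range (2 * n + 1), (W.d (Q m) + W.δ (Q m)) := by
          simp only [hx]
          rw [Finset.sum_comm]
          refine Finset.sum_congr rfl fun m hm => ?_
          rw [Finset.sum_add_distrib]
          congr 1
          · rw [Finset.sum_eq_single_of_mem (c1 m)
              (Finset.mem_union_left _ (Finset.mem_image_of_mem c1 hm))
              (fun q _ hne => if_neg hne)]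
            exact if_pos rfl
          · rw [Finset.sum_eq_single_of_mem (c2 m)
              (Finset.mem_union_right _ (Finset.mem_image_of_mem c2 hm))
              (fun q _ hne => if_neg hne)]
            exact if_pos rfl
      _ = 0 := hD
  have hall := components_eq_zero W.graded.2.2.2 (fun p _ => hxmem p) hsum0
  have hp0 : ((2 * n - j, j + 1) : ℕ × ℕ) ∈ s :=
    Finset.mem_union_right _ (Finset.mem_image_of_mem c2 (Finset.mem_range.mpr (by omega)))
  have h0 := hall _ hp0
  have h1 : ∑ m ∈ Finset.range (2 * n + 1),
      (if ((2 * n - j, j + 1) : ℕ × ℕ) = c1 m then W.d (Q m) else 0) = W.d (Q (j + 1)) := by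
    by_cases hj2 : j < 2 * n
    · rw [Finset.sum_eq_single (j + 1)]
      · rw [if_pos (by simp only [hc1, Prod.mk.injEq]; exact ⟨by omega, trivial⟩)]
      · intro m hm hne
        refine if_neg fun hc => ?_
        simp only [hc1, Prod.mk.injEq] at hc
        omega
      · intro h
        exact absurd (Finset.mem_range.mpr (by omega)) h
    · rw [hzero (j + 1) (by omega), map_zero]
      refine Finset.sum_eq_zero fun m hm => if_neg fun hc => ?_
      simp only [hc1, Prod.mk.injEq] at hc
      omega
  have h2 : ∑ m ∈ Finset.range (2 * n + 1),
      (if ((2 * n - j, j + 1) : ℕ × ℕ) = c2 m then W.δ (Q m) else 0) = W.δ (Q j) := by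
    rw [Finset.sum_eq_single j]
    · rw [if_pos rfl]
    · intro m hm hne
      refine if_neg fun hc => ?_
      simp only [hc2, Prod.mk.injEq] at hc
      omega
    · intro h
      exact absurd (Finset.mem_range.mpr (by omega)) h
  rw [hx] at h0
  simp only at h0
  rw [Finset.sum_add_distrib, h1, h2] at h0
  rw [add_comm] at h0
  exact h0

end
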